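/- Let n be a natural number and let N : ℕ → ℕ be a function satisfying: N i = N (n − i) for every i ≤ n; N i = 0 for every i > n; ∑_{i=0}^{n} N i = 3; and there exists an index i with N i ≠ 0 and N (i+1) ≠ 0. Then n is even, n ≥ 2, and N (n/2 − 1) = 1, N (n/2) = 1, and N (n/2 + 1) = 1. -/
import Mathlib

private lemma sum_three (n : ℕ) (N : ℕ → ℕ) (a b c : ℕ)
    (hab : a ≠ b) (hac : a ≠ c) (hbc : b ≠ c)
    (han : a ≤ n) (hbn : b ≤ n) (hcn : c ≤ n)
    (hsum : ∑ i ∈ Finset.range (n + 1), N i = 3)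
    (ha : N a ≠ 0) (hb : N b ≠ 0) (hc : N c ≠ 0) :
    N a = 1 ∧ N b = 1 ∧ N c = 1 ∧
      ∀ j ∈ Finset.range (n + 1) \ {a, b, c}, N j = 0 := by
  have hsub : ({a, b, c} : Finset ℕ) ⊆ Finset.range (n + 1) := by
    intro x hx
    simp only [Finset.mem_insert, Finset.mem_singleton] at hx
    rcases hx with rfl | rfl | rfl <;> simp <;> omega
  have hdiff := Finset.sum_sdiff (f := N) hsub
  have hset : ∑ i ∈ ({a, b, c} : Finset ℕ), N i = N a + N b + N c := by
    rw [Finset.sum_insert (by simp [hab, hac]),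
      Finset.sum_insert (by simp [hbc]), Finset.sum_singleton]; ring
  rw [hset, hsum] at hdiff
  have h1 : N a = 1 ∧ N b = 1 ∧ N c = 1 ∧
      ∑ j ∈ Finset.range (n + 1) \ {a, b, c}, N j = 0 := by omega
  refine ⟨h1.1, h1.2.1, h1.2.2.1, ?_⟩
  intro j hj
  exact Finset.sum_eq_zero_iff.mp h1.2.2.2 j hj

private lemma sum_four (n : ℕ) (N : ℕ → ℕ) (a b c d : ℕ)
    (hab : a ≠ b) (hac : a ≠ c) (had : a ≠ d) (hbc : b ≠ c) (hbd : b ≠ d)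
    (hcd : c ≠ d)
    (han : a ≤ n) (hbn : b ≤ n) (hcn : c ≤ n) (hdn : d ≤ n)
    (hsum : ∑ i ∈ Finset.range (n + 1), N i = 3)
    (ha : N a ≠ 0) (hb : N b ≠ 0) (hc : N c ≠ 0) (hd : N d ≠ 0) : False := by
  have hsub : ({a, b, c, d} : Finset ℕ) ⊆ Finset.range (n + 1) := by
    intro x hx
    simp only [Finset.mem_insert, Finset.mem_singleton] at hx
    rcases hx with rfl | rfl | rfl | rfl <;> simp <;> omega
  have hle := Finset.sum_le_sum_of_subset (f := N) hsub
  have hset : ∑ i ∈ ({a, b, c, d} : Finset ℕ), N i = N a + N b + N c + N d := by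
    rw [Finset.sum_insert (by simp [hab, hac, had]),
      Finset.sum_insert (by simp [hbc, hbd]),
      Finset.sum_insert (by simp [hcd]), Finset.sum_singleton]; ring
  rw [hset, hsum] at hle
  omega

/-- The three-fixed-point combinatorics: if N is symmetric about n/2, vanishes
above n, sums to 3, and has two consecutive nonzero values, then n is even,
n ≥ 2, and N (n/2 − 1) = N (n/2) = N (n/2 + 1) = 1. -/
theorem stmt_10 (n : ℕ) (N : ℕ → ℕ)
    (hsym : ∀ i ≤ n, N i = N (n - i))
    (hzero : ∀ i, n < i → N i = 0)
    (hsum : ∑ i ∈ Finset.range (n + 1), N i = 3)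
    (hconsec : ∃ i, N i ≠ 0 ∧ N (i + 1) ≠ 0) :
    Even n ∧ 2 ≤ n ∧ N (n / 2 - 1) = 1 ∧ N (n / 2) = 1 ∧ N (n / 2 + 1) = 1 := by
  obtain ⟨i, hi, hi1⟩ := hconsec
  have hin : i ≤ n := by by_contra h; exact hi (hzero i (by omega))
  have hi1n : i + 1 ≤ n := by by_contra h; exact hi1 (hzero (i + 1) (by omega))
  -- symmetric partners
  have hsi : N i = N (n - i) := hsym i hin
  have hsi1 : N (i + 1) = N (n - (i + 1)) := hsym (i + 1) hi1n
  -- main case split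
  rcases lt_trichotomy n (2 * i) with hlt | heq | hgt
  · -- n < 2i : four distinct nonzero points n-i-1 < n-i < i < i+1
    exact absurd (sum_four n N (n - (i + 1)) (n - i) i (i + 1)
      (by omega) (by omega) (by omega) (by omega) (by omega) (by omega)
      (by omega) (by omega) hin hi1n hsum
      (by rw [← hsi1]; exact hi1) (by rw [← hsi]; exact hi) hi hi1) (by simp)
  · -- n = 2i : nonzero at i-1, i, i+1 ; i ≥ 1 since i+1 ≤ n = 2i
    have hi1pos : 1 ≤ i := by omega
    have hkey := sum_three n N (i - 1) i (i + 1)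
      (by omega) (by omega) (by omega) (by omega) hin hi1n hsum
      (by have : n - (i + 1) = i - 1 := by omega
          rw [this] at hsi1; rw [← hsi1]; exact hi1) hi hi1
    have hn2 : n / 2 = i := by omega
    exact ⟨⟨i, by omega⟩, by omega, by rw [hn2]; exact hkey.1,
      by rw [hn2]; exact hkey.2.1, by rw [hn2]; exact hkey.2.2.1⟩
  · rcases lt_trichotomy n (2 * i + 2) with hlt2 | heq2 | hgt2
    · -- n = 2i + 1 : odd case, derive contradiction
      have hne : n = 2 * i + 1 := by omega
      have hNi1 : N (i + 1) = N i := by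
        rw [hsi]; congr 1; omega
      -- sum over {i, i+1} is 2 * N i ≤ 3, so N i = 1 = N (i+1)
      have hsub : ({i, i + 1} : Finset ℕ) ⊆ Finset.range (n + 1) := by
        intro x hx
        simp only [Finset.mem_insert, Finset.mem_singleton] at hx
        rcases hx with rfl | rfl <;> simp <;> omega
      have hdiff := Finset.sum_sdiff (f := N) hsub
      have hset : ∑ j ∈ ({i, i + 1} : Finset ℕ), N j = N i + N (i + 1) := by
        rw [Finset.sum_insert (by simp), Finset.sum_singleton]
      rw [hset, hsum, hNi1] at hdiff
      have hNi : N i = 1 := by omega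
      have hrest : ∑ j ∈ Finset.range (n + 1) \ {i, i + 1}, N j = 1 := by omega
      obtain ⟨j, hjmem, hjne⟩ :=
        Finset.exists_ne_zero_of_sum_ne_zero (by rw [hrest]; omega)
      simp only [Finset.mem_sdiff, Finset.mem_range, Finset.mem_insert,
        Finset.mem_singleton, not_or] at hjmem
      obtain ⟨hjlt, hji, hji1⟩ := hjmem
      have hjn : j ≤ n := by omega
      have hsj : N j = N (n - j) := hsym j hjn
      -- four distinct nonzero: i, i+1, j, n-j
      exact absurd (sum_four n N i (i + 1) j (n - j)
        (by omega) (by omega) (by omega) (by omega) (by omega) (by omega)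
        hin hi1n hjn (by omega) hsum hi hi1 hjne
        (by rw [← hsj]; exact hjne)) (by simp)
    · -- n = 2i + 2 : nonzero at i, i+1, i+2
      have hkey := sum_three n N i (i + 1) (i + 2)
        (by omega) (by omega) (by omega) hin hi1n (by omega) hsum
        hi hi1
        (by have : n - i = i + 2 := by omega
            rw [this] at hsi; rw [← hsi]; exact hi)
      have hn2 : n / 2 = i + 1 := by omega
      exact ⟨⟨i + 1, by omega⟩, by omega,
        by rw [hn2]; simpa using hkey.1,
        by rw [hn2]; exact hkey.2.1, by rw [hn2]; exact hkey.2.2.1⟩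
    · -- n > 2i + 2 : four distinct nonzero points i < i+1 < n-i-1 < n-i
      exact absurd (sum_four n N i (i + 1) (n - (i + 1)) (n - i)
        (by omega) (by omega) (by omega) (by omega) (by omega) (by omega)
        hin hi1n (by omega) (by omega) hsum hi hi1
        (by rw [← hsi1]; exact hi1) (by rw [← hsi]; exact hi)) (by simp)
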